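/- Let X be a Banach space and (x_i*)_{i=1}^∞ a sequence in X* equivalent to the unit vector basis of ℓ1(ℕ). Assume there is a sequence (Q_n)_n of bounded finite-rank projections on X satisfying: (i) Q_n[X] ⊆ Q_{n+1}[X] for all n and Q_n x → x for all x ∈ X; (ii) there exist a strictly increasing sequence (k_n)_n of natural numbers and 0 < ε < 1 with ε/(1−ε) < (sup_n ‖Q_n‖)⁻¹ such that for every n the subspace Q_n*[X*] is ε-close to span{x_i* : i = 1, …, k_n}. Then X is isomorphic to a Bourgain–Delbaen space. -/

import Mathlib

open scoped ENNReal
open Filter Topology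

set_option maxHeartbeats 1000000
set_option synthInstance.maxHeartbeats 400000

noncomputable section

/-- `ℓ∞(Γ)`. -/
abbrev Linf (Γ : Type*) : Type _ := lp (fun _ : Γ => ℝ) ∞

namespace BD

variable {Γ : Type*}

/-- The evaluation map on `ℓ∞(Γ)`, as a linear map. -/
def evalLM (γ : Γ) : Linf Γ →ₗ[ℝ] ℝ where
  toFun f := f γ
  map_add' f g := by simp
  map_smul' c f := by simp

/-- The evaluation functional `e_γ^*` on `ℓ∞(Γ)`. -/
def evalL (γ : Γ) : Linf Γ →L[ℝ] ℝ :=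
  LinearMap.mkContinuous (evalLM γ) 1 fun f => by
    rw [one_mul]
    exact lp.norm_apply_le_norm ENNReal.top_ne_zero f γ

/-- The restriction map `ℓ∞(Γ) → ℓ∞(A)`, as a linear map. -/
def restrLM (A : Finset Γ) : Linf Γ →ₗ[ℝ] (↥A → ℝ) where
  toFun f γ := f γ.1
  map_add' f g := by ext γ; simp
  map_smul' c f := by ext γ; simp

/-- The restriction operator `r_A : ℓ∞(Γ) → ℓ∞(A)` for a finite set `A ⊆ Γ`. -/
def restrCLM (A : Finset Γ) : Linf Γ →L[ℝ] (↥A → ℝ) :=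
  LinearMap.mkContinuous (restrLM A) 1 fun f => by
    rw [one_mul]
    refine (pi_norm_le_iff_of_nonneg (norm_nonneg f)).2 fun γ => ?_
    exact lp.norm_apply_le_norm ENNReal.top_ne_zero f γ.1

/-- The data defining a Bourgain-Delbaen space: a strictly increasing sequence of
nonempty finite subsets of `Γ` covering `Γ`, together with a uniformly bounded compatible
sequence of extension operators. -/
structure System (Γ : Type*) where
  Γs : ℕ → Finset Γ
  strict : StrictMono Γs
  nonempty : ∀ q, (Γs q).Nonempty
  covers : ∀ γ : Γ, ∃ q, γ ∈ Γs q
  i : ∀ q, (↥(Γs q) → ℝ) →L[ℝ] Linf Γ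
  extension : ∀ q (x : ↥(Γs q) → ℝ) (γ : ↥(Γs q)), i q x γ.1 = x γ
  compat : ∀ p q, p < q → ∀ x : ↥(Γs p) → ℝ, i p x = i q (restrCLM (Γs q) (i p x))
  bdd : BddAbove (Set.range fun q => ‖i q‖)

/-- `C = sup_q ‖i_q‖`. -/
def System.C (S : System Γ) : ℝ := ⨆ q, ‖S.i q‖

/-- `Δ_0 = Γ_0`, `Δ_q = Γ_q \ Γ_{q-1}`. -/
def System.Δ (S : System Γ) : ℕ → Finset Γ := fun q =>
  letI := Classical.decEq Γ
  match q with
  | 0 => S.Γs 0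
  | q + 1 => S.Γs (q + 1) \ S.Γs q

/-- The unique `q` with `γ ∈ Δ_q`. -/
def System.rk (S : System Γ) (γ : Γ) : ℕ :=
  letI := Classical.decEq Γ
  Nat.find (S.covers γ)

/-- The vector `d_γ = i_q (e_γ)` for `γ ∈ Δ_q`. -/
def System.dvec (S : System Γ) (γ : Γ) : Linf Γ :=
  letI := Classical.decEq Γ
  S.i (S.rk γ) fun δ => if (δ : Γ) = γ then 1 else 0

/-- `M_q = span {d_γ : γ ∈ Δ_q}`. -/
def System.M (S : System Γ) (q : ℕ) : Submodule ℝ (Linf Γ) :=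
  Submodule.span ℝ (S.dvec '' (S.Δ q : Set Γ))

/-- The Bourgain-Delbaen space: the closed linear span of the `d_γ`'s in `ℓ∞(Γ)`. -/
def System.space (S : System Γ) : Submodule ℝ (Linf Γ) :=
  (Submodule.span ℝ (Set.range S.dvec)).topologicalClosure


section ShortcutInstances

noncomputable instance (priority := 10000) instLinfNACG (Γ : Type*) :
    NormedAddCommGroup (Linf Γ) := inferInstance

noncomputable instance (priority := 10000) instLinfNS (Γ : Type*) :
    NormedSpace ℝ (Linf Γ) := inferInstance

noncomputable instance (priority := 10000) instSpaceNACG (S : System Γ) :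
    NormedAddCommGroup ↥S.space := inferInstance

noncomputable instance (priority := 10000) instSpaceNS (S : System Γ) :
    NormedSpace ℝ ↥S.space := inferInstance

noncomputable instance (priority := 10000) instDualNACG (S : System Γ) :
    NormedAddCommGroup (↥S.space →L[ℝ] ℝ) := inferInstance

noncomputable instance (priority := 10000) instDualNS (S : System Γ) :
    NormedSpace ℝ (↥S.space →L[ℝ] ℝ) := inferInstance

end ShortcutInstances

lemma dvec_mem (S : System Γ) (γ : Γ) : S.dvec γ ∈ S.space :=
  Submodule.le_topologicalClosure _ (Submodule.subset_span ⟨γ, rfl⟩)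

end BD

/-- `E₂` is `ε`-close to `E₁`: there is an invertible bounded operator `T` from `E₁` onto `E₂`
with `‖Tx - x‖ ≤ ε ‖x‖` for all `x ∈ E₁`. -/
def EpsClose {W : Type*} [NormedAddCommGroup W] [NormedSpace ℝ W] (ε : ℝ)
    (E₁ E₂ : Submodule ℝ W) : Prop :=
  ∃ T : ↥E₁ ≃L[ℝ] ↥E₂, ∀ x : ↥E₁, ‖(T x : W) - (x : W)‖ ≤ ε * ‖x‖

/-- The image `Q^*[X^*]` of the adjoint of `Q`, i.e. the set of functionals `g ∘ Q`. -/
def adjRange {X : Type*} [NormedAddCommGroup X] [NormedSpace ℝ X] (Q : X →L[ℝ] X) :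
    Submodule ℝ (X →L[ℝ] ℝ) where
  carrier := {f | ∃ g : X →L[ℝ] ℝ, f = g.comp Q}
  add_mem' := by rintro f g ⟨f', rfl⟩ ⟨g', rfl⟩; exact ⟨f' + g', by ext x; simp⟩
  zero_mem' := ⟨0, by ext x; simp⟩
  smul_mem' := by rintro c f ⟨g, rfl⟩; exact ⟨c • g, by ext x; simp⟩

namespace BD

variable {Γ : Type*}

lemma System.rk_spec' (S : System Γ) (γ : Γ) : γ ∈ S.Γs (S.rk γ) := by
  letI := Classical.decEq Γ
  exact Nat.find_spec (S.covers γ)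

lemma System.rk_min'' (S : System Γ) {γ : Γ} {m : ℕ} (h : γ ∈ S.Γs m) : S.rk γ ≤ m := by
  letI := Classical.decEq Γ
  exact Nat.find_min' (S.covers γ) h

lemma System.dvec_eq' (S : System Γ) [DecidableEq Γ] (γ : Γ) :
    S.dvec γ = S.i (S.rk γ) (fun δ => if (δ : Γ) = γ then 1 else 0) := by
  unfold System.dvec; congr!

end BD

section Statement13Aux

variable {X : Type*} [NormedAddCommGroup X] [NormedSpace ℝ X] [CompleteSpace X]

set_option maxHeartbeats 2000000 in
theorem statement13_main (xs : ℕ → (X →L[ℝ] ℝ)) (a b : ℝ) (ha : 0 < a) (hb : 0 < b)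
    (hxsl : ∀ (A : Finset ℕ) (lam : ℕ → ℝ),
      a * ∑ i ∈ A, |lam i| ≤ ‖∑ i ∈ A, lam i • xs i‖)
    (Q : ℕ → (X →L[ℝ] X))
    (hproj : ∀ n x, Q n (Q n x) = Q n x)
    (hfinrank : ∀ n, FiniteDimensional ℝ ↥(LinearMap.range (Q n : X →ₗ[ℝ] X)))
    (hmono' : ∀ p q, p ≤ q → LinearMap.range (Q p : X →ₗ[ℝ] X) ≤ LinearMap.range (Q q : X →ₗ[ℝ] X))
    (hconv : ∀ x : X, Filter.Tendsto (fun n => Q n x) Filter.atTop (nhds x))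
    (k : ℕ → ℕ) (hk : StrictMono k) (hk0 : 0 < k 0)
    (ε : ℝ) (hε0 : 0 < ε) (hε1 : ε < 1)
    (C : ℝ) (hC0 : 0 < C) (hCn : ∀ n, ‖Q n‖ ≤ C)
    (hrC : ε / (1 - ε) * C < 1)
    (hxsb : ∀ i, ‖xs i‖ ≤ b)
    (hclose : ∀ n, EpsClose ε (Submodule.span ℝ (xs '' {i | i < k n})) (adjRange (Q n))) :
    ∃ (Γ : Type) (S : BD.System Γ), Nonempty (X ≃L[ℝ] ↥S.space) := by
  classical
  have h1ε : 0 < 1 - ε := by linarith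
  set D : ℝ := C / (a * (1 - ε)) with hD
  have hD0 : 0 < D := by positivity
  set r : ℝ := ε / (1 - ε) * C with hrdef
  have hr0 : 0 < r := by positivity
  have h1r : 0 < 1 - r := by linarith
  set M : ℝ := D / (1 - r) with hM
  have hM0 : 0 < M := by positivity
  -- the key norming estimate
  have key : ∀ (q : ℕ) (y : X), y ∈ LinearMap.range (Q q : X →ₗ[ℝ] X) → ∀ B : ℝ, 0 ≤ B →
      (∀ i, i < k q → |xs i y| ≤ B) → ‖y‖ ≤ M * B := by
    intro q y hy B hB0 hB
    rcases eq_or_ne y 0 with rfl | hy0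
    · simpa using (mul_nonneg hM0.le hB0)
    obtain ⟨f₀, hf₀n, hf₀y⟩ := exists_dual_vector ℝ y (norm_ne_zero_iff.2 hy0)
    have hf₀y' : f₀ y = ‖y‖ := by simpa using hf₀y
    set f : X →L[ℝ] ℝ := f₀.comp (Q q) with hfdef
    have hfF : f ∈ adjRange (Q q) := ⟨f₀, rfl⟩
    have hQy : Q q y = y := by
      obtain ⟨x0, hx0⟩ := hy
      rw [← hx0]; exact hproj q x0
    have hfy : f y = ‖y‖ := by
      rw [hfdef]
      simpa [hQy] using hf₀y'
    have hfnorm : ‖f‖ ≤ C := by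
      calc ‖f‖ ≤ ‖f₀‖ * ‖Q q‖ := ContinuousLinearMap.opNorm_comp_le _ _
        _ ≤ C := by rw [hf₀n, one_mul]; exact hCn q
    obtain ⟨T, hT⟩ := hclose q
    set e := T.symm ⟨f, hfF⟩ with hedef
    have hTe : ((T e : ↥(adjRange (Q q))) : X →L[ℝ] ℝ) = f := by
      rw [hedef, T.apply_symm_apply]
    have hTee : ‖f - (e : X →L[ℝ] ℝ)‖ ≤ ε * ‖(e : X →L[ℝ] ℝ)‖ := by
      have h := hT e
      rw [hTe] at h
      exact h
    have hen : ‖(e : X →L[ℝ] ℝ)‖ ≤ C / (1 - ε) := by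
      have h1 : ‖(e : X →L[ℝ] ℝ)‖ ≤ ‖f‖ + ‖f - (e : X →L[ℝ] ℝ)‖ := by
        have := norm_sub_norm_le f (e : X →L[ℝ] ℝ)
        have h2 := norm_sub_le f (f - (e : X →L[ℝ] ℝ))
        simpa using h2
      rw [le_div_iff₀ h1ε]
      nlinarith [hTee, hfnorm, norm_nonneg ((e : X →L[ℝ] ℝ))]
    -- coefficients of e
    have hemem : (e : X →L[ℝ] ℝ) ∈ Submodule.span ℝ (xs '' {i | i < k q}) := e.2
    rw [Finsupp.mem_span_image_iff_linearCombination] at hemem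
    obtain ⟨l, hlsupp, hl⟩ := hemem
    rw [Finsupp.mem_supported] at hlsupp
    have hl' : ∑ i ∈ l.support, l i • xs i = (e : X →L[ℝ] ℝ) := by
      rw [← hl, Finsupp.linearCombination_apply, Finsupp.sum]
    have hsumabs : ∑ i ∈ l.support, |l i| ≤ D := by
      have h1 : a * ∑ i ∈ l.support, |l i| ≤ C / (1 - ε) := by
        refine le_trans ?_ hen
        rw [← hl']; exact hxsl l.support l
      rw [hD, show C / (a * (1 - ε)) = C / (1 - ε) / a by rw [div_div, mul_comm],
        le_div_iff₀ ha]
      calc (∑ i ∈ l.support, |l i|) * a = a * ∑ i ∈ l.support, |l i| := mul_comm _ _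
        _ ≤ C / (1 - ε) := h1
    -- the estimate
    have h6 : |(f - (e : X →L[ℝ] ℝ)) y| ≤ (ε * ‖(e : X →L[ℝ] ℝ)‖) * ‖y‖ := by
      calc |(f - (e : X →L[ℝ] ℝ)) y| ≤ ‖f - (e : X →L[ℝ] ℝ)‖ * ‖y‖ :=
        (f - (e : X →L[ℝ] ℝ)).le_opNorm y
      _ ≤ (ε * ‖(e : X →L[ℝ] ℝ)‖) * ‖y‖ := mul_le_mul_of_nonneg_right hTee (norm_nonneg y)
    have h7 : |(e : X →L[ℝ] ℝ) y| ≤ (∑ i ∈ l.support, |l i|) * B := by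
      rw [← hl']
      rw [Finset.sum_mul]
      calc |(∑ i ∈ l.support, l i • xs i) y| = |∑ i ∈ l.support, l i * xs i y| := by
            rw [ContinuousLinearMap.sum_apply]
            simp [ContinuousLinearMap.smul_apply]
        _ ≤ ∑ i ∈ l.support, |l i * xs i y| := Finset.abs_sum_le_sum_abs _ _
        _ ≤ ∑ i ∈ l.support, |l i| * B := by
            apply Finset.sum_le_sum
            intro i hi
            rw [abs_mul]
            have hikq : i < k q := hlsupp hi
            exact mul_le_mul_of_nonneg_left (hB i hikq) (abs_nonneg _)
    have h8 : ε * ‖(e : X →L[ℝ] ℝ)‖ ≤ r := by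
      rw [hrdef]
      have := mul_le_mul_of_nonneg_left hen hε0.le
      calc ε * ‖(e : X →L[ℝ] ℝ)‖ ≤ ε * (C / (1 - ε)) := this
        _ = ε / (1 - ε) * C := by ring
    have h9 : ‖y‖ ≤ r * ‖y‖ + D * B := by
      have h10 : ‖y‖ = f y := hfy.symm
      have h11 : f y = (f - (e : X →L[ℝ] ℝ)) y + (e : X →L[ℝ] ℝ) y := by
        rw [ContinuousLinearMap.sub_apply]; ring
      have h12 : f y ≤ |(f - (e : X →L[ℝ] ℝ)) y| + |(e : X →L[ℝ] ℝ) y| := by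
        rw [h11]
        exact (add_le_add (le_abs_self _) (le_abs_self _))
      have h13 : (ε * ‖(e : X →L[ℝ] ℝ)‖) * ‖y‖ ≤ r * ‖y‖ :=
        mul_le_mul_of_nonneg_right h8 (norm_nonneg y)
      have h14 : (∑ i ∈ l.support, |l i|) * B ≤ D * B :=
        mul_le_mul_of_nonneg_right hsumabs hB0
      calc ‖y‖ = f y := h10
        _ ≤ |(f - (e : X →L[ℝ] ℝ)) y| + |(e : X →L[ℝ] ℝ) y| := h12
        _ ≤ (ε * ‖(e : X →L[ℝ] ℝ)‖) * ‖y‖ + (∑ i ∈ l.support, |l i|) * B :=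
            add_le_add h6 h7
        _ ≤ r * ‖y‖ + D * B := add_le_add h13 h14
    rw [hM, div_mul_eq_mul_div, le_div_iff₀ h1r]
    nlinarith [h9]
  -- the map J
  have memJ : ∀ x : X, Memℓp (fun i => xs i x) ∞ := by
    intro x
    apply memℓp_infty
    refine ⟨b * ‖x‖, ?_⟩
    rintro s ⟨i, rfl⟩
    calc ‖xs i x‖ ≤ ‖xs i‖ * ‖x‖ := (xs i).le_opNorm x
      _ ≤ b * ‖x‖ := mul_le_mul_of_nonneg_right (hxsb i) (norm_nonneg x)
  let Jlin : X →ₗ[ℝ] Linf ℕ :=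
    { toFun := fun x => ⟨fun i => xs i x, memJ x⟩
      map_add' := fun x y => by
        apply Subtype.ext
        rw [lp.coeFn_add]
        funext i
        simp
      map_smul' := fun c x => by
        apply Subtype.ext
        rw [lp.coeFn_smul]
        funext i
        simp }
  let J : X →L[ℝ] Linf ℕ := Jlin.mkContinuous b (fun x => by
    apply lp.norm_le_of_forall_le (by positivity)
    intro i
    calc ‖xs i x‖ ≤ ‖xs i‖ * ‖x‖ := (xs i).le_opNorm x
      _ ≤ b * ‖x‖ := mul_le_mul_of_nonneg_right (hxsb i) (norm_nonneg x))
  have Japp : ∀ (x : X) (i : ℕ), (J x : ∀ _ : ℕ, ℝ) i = xs i x := fun x i => rfl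
  have hJnorm : ∀ x : X, ‖J x‖ ≤ b * ‖x‖ := fun x => by
    calc ‖J x‖ ≤ ‖J‖ * ‖x‖ := J.le_opNorm x
      _ ≤ b * ‖x‖ := mul_le_mul_of_nonneg_right (Jlin.mkContinuous_norm_le hb.le _) (norm_nonneg x)
  have Jlow : ∀ x : X, ‖x‖ ≤ M * ‖J x‖ := by
    intro x
    have h1 : ∀ q, ‖Q q x‖ ≤ M * ‖J (Q q x)‖ := by
      intro q
      apply key q (Q q x) ⟨x, rfl⟩ _ (norm_nonneg _)
      intro i _
      have := lp.norm_apply_le_norm ENNReal.top_ne_zero (J (Q q x)) i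
      rw [Japp] at this
      simpa [Real.norm_eq_abs] using this
    have t1 : Filter.Tendsto (fun q => ‖Q q x‖) Filter.atTop (nhds ‖x‖) := (hconv x).norm
    have t2 : Filter.Tendsto (fun q => M * ‖J (Q q x)‖) Filter.atTop (nhds (M * ‖J x‖)) :=
      (((J.continuous.tendsto x).comp (hconv x)).norm).const_mul M
    exact le_of_tendsto_of_tendsto' t1 t2 h1
  -- linear independence and dimension counts
  have li : LinearIndependent ℝ xs := by
    rw [linearIndependent_iff']
    intro s g hsum i hi
    have h1 : a * ∑ j ∈ s, |g j| ≤ 0 := by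
      calc a * ∑ j ∈ s, |g j| ≤ ‖∑ j ∈ s, g j • xs j‖ := hxsl s g
        _ = 0 := by rw [hsum, norm_zero]
    have h2 : ∑ j ∈ s, |g j| ≤ 0 :=
      le_of_mul_le_mul_left (by rw [mul_zero]; exact h1) ha
    have h3 : ∑ j ∈ s, |g j| = 0 :=
      le_antisymm h2 (Finset.sum_nonneg fun j _ => abs_nonneg _)
    have h4 := (Finset.sum_eq_zero_iff_of_nonneg (fun j _ => abs_nonneg (g j))).1 h3 i hi
    exact abs_eq_zero.1 h4
  have hEfr : ∀ q, Module.finrank ℝ ↥(Submodule.span ℝ (xs '' {i | i < k q})) = k q := by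
    intro q
    have hset : {i : ℕ | i < k q} = ↑(Finset.range (k q)) := by
      rw [Finset.coe_range]; rfl
    have hli : LinearIndependent ℝ (fun i : ↥(Finset.range (k q)) => xs ↑i) :=
      li.comp _ Subtype.val_injective
    have him : xs '' {i : ℕ | i < k q} = Set.range (fun i : ↥(Finset.range (k q)) => xs ↑i) := by
      ext f
      constructor
      · rintro ⟨i, hi, rfl⟩
        exact ⟨⟨i, Finset.mem_range.2 hi⟩, rfl⟩
      · rintro ⟨⟨i, hi⟩, rfl⟩
        exact ⟨i, Finset.mem_range.1 hi, rfl⟩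
    rw [him, finrank_span_eq_card hli, Fintype.card_coe, Finset.card_range]
  have hfinE : ∀ q, FiniteDimensional ℝ ↥(Submodule.span ℝ (xs '' {i | i < k q})) := by
    intro q
    apply FiniteDimensional.span_of_finite
    exact Set.Finite.image _ (Set.finite_Iio (k q))
  have hfinF : ∀ q, FiniteDimensional ℝ ↥(adjRange (Q q)) := by
    intro q
    obtain ⟨T, -⟩ := hclose q
    haveI := hfinE q
    exact Module.Finite.equiv T.toLinearEquiv
  have hFfr : ∀ q, Module.finrank ℝ ↥(adjRange (Q q)) = k q := by
    intro q
    obtain ⟨T, -⟩ := hclose q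
    rw [← T.toLinearEquiv.finrank_eq, hEfr q]
  -- the coordinate maps R
  let R : ∀ q, ↥(LinearMap.range (Q q : X →ₗ[ℝ] X)) →ₗ[ℝ] (↥(Finset.range (k q)) → ℝ) := fun q =>
    { toFun := fun y i => xs ↑i (y : X)
      map_add' := fun y z => by funext i; simp
      map_smul' := fun c y => by funext i; simp }
  have Rzero : ∀ q (y : ↥(LinearMap.range (Q q : X →ₗ[ℝ] X))), R q y = 0 → y = 0 := by
    intro q y h
    have h1 : ‖(y : X)‖ ≤ M * 0 := by
      apply key q (y : X) y.2 0 le_rfl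
      intro i hi
      have := congrFun h ⟨i, Finset.mem_range.2 hi⟩
      simp only [Pi.zero_apply] at this
      rw [show xs i (y : X) = 0 from this]
      simp
    have : (y : X) = 0 := by
      rw [mul_zero] at h1
      exact norm_le_zero_iff.1 h1
    exact Subtype.ext this
  have Rinj : ∀ q, Function.Injective (R q) := by
    intro q y z h
    have : R q (y - z) = 0 := by rw [map_sub, h, sub_self]
    have := Rzero q _ this
    rwa [sub_eq_zero] at this
  have hfr : ∀ q, Module.finrank ℝ ↥(LinearMap.range (Q q : X →ₗ[ℝ] X)) = k q := by
    intro q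
    haveI := hfinrank q
    have hub : Module.finrank ℝ ↥(LinearMap.range (Q q : X →ₗ[ℝ] X)) ≤ k q := by
      have h1 := LinearMap.finrank_le_finrank_of_injective (Rinj q)
      rwa [Module.finrank_pi, Fintype.card_coe, Finset.card_range] at h1
    have hlb : k q ≤ Module.finrank ℝ ↥(LinearMap.range (Q q : X →ₗ[ℝ] X)) := by
      let ψ : ↥(adjRange (Q q)) →ₗ[ℝ] Module.Dual ℝ ↥(LinearMap.range (Q q : X →ₗ[ℝ] X)) :=
        { toFun := fun f => ((f : X →L[ℝ] ℝ) : X →ₗ[ℝ] ℝ).comp ((LinearMap.range (Q q : X →ₗ[ℝ] X)).subtype)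
          map_add' := fun f g => by ext y; simp
          map_smul' := fun c f => by ext y; simp }
      have hψinj : Function.Injective ψ := by
        intro f g h
        apply Subtype.ext
        obtain ⟨gf, hgf⟩ := f.2
        obtain ⟨gg, hgg⟩ := g.2
        ext x
        have h1 : (f : X →L[ℝ] ℝ) (Q q x) = (g : X →L[ℝ] ℝ) (Q q x) := by
          have := congrArg (fun (u : Module.Dual ℝ ↥(LinearMap.range (Q q : X →ₗ[ℝ] X))) =>
            u ⟨Q q x, ⟨x, rfl⟩⟩) h
          simpa [ψ] using this
        calc (f : X →L[ℝ] ℝ) x = gf (Q q x) := by rw [hgf]; rfl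
          _ = gf (Q q (Q q x)) := by rw [hproj]
          _ = (f : X →L[ℝ] ℝ) (Q q x) := by rw [hgf]; rfl
          _ = (g : X →L[ℝ] ℝ) (Q q x) := h1
          _ = gg (Q q (Q q x)) := by rw [hgg]; rfl
          _ = gg (Q q x) := by rw [hproj]
          _ = (g : X →L[ℝ] ℝ) x := by rw [hgg]; rfl
      haveI := hfinF q
      have h2 := LinearMap.finrank_le_finrank_of_injective hψinj
      rw [hFfr q, Subspace.dual_finrank_eq] at h2
      exact h2
    exact le_antisymm hub hlb
  have Rbij : ∀ q, Function.Bijective (R q) := by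
    intro q
    haveI := hfinrank q
    refine ⟨Rinj q, ?_⟩
    have heq : Module.finrank ℝ ↥(LinearMap.range (Q q : X →ₗ[ℝ] X)) =
        Module.finrank ℝ (↥(Finset.range (k q)) → ℝ) := by
      rw [hfr q, Module.finrank_pi, Fintype.card_coe, Finset.card_range]
    exact (LinearMap.injective_iff_surjective_of_finrank_eq_finrank heq).1 (Rinj q)
  let σ : ∀ q, (↥(Finset.range (k q)) → ℝ) ≃ₗ[ℝ] ↥(LinearMap.range (Q q : X →ₗ[ℝ] X)) := fun q =>
    (LinearEquiv.ofBijective (R q) (Rbij q)).symm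
  have hσ : ∀ q v, R q (σ q v) = v := fun q v =>
    (LinearEquiv.ofBijective (R q) (Rbij q)).apply_symm_apply v
  have hσ2 : ∀ q (y : ↥(LinearMap.range (Q q : X →ₗ[ℝ] X))), σ q (R q y) = y := fun q y =>
    (LinearEquiv.ofBijective (R q) (Rbij q)).symm_apply_apply y
  -- the extension operators
  let ii : ∀ q, (↥(Finset.range (k q)) → ℝ) →L[ℝ] Linf ℕ := fun q =>
    (J.comp (LinearMap.range (Q q : X →ₗ[ℝ] X)).subtypeL).comp
      (LinearMap.toContinuousLinearMap ((σ q : (↥(Finset.range (k q)) → ℝ) →ₗ[ℝ] _)))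
  have hiiapp : ∀ q v, ii q v = J ((σ q v : X)) := fun q v => rfl
  have hiicoord : ∀ q v (i : ℕ), (ii q v : ∀ _ : ℕ, ℝ) i = xs i ((σ q v : X)) := fun q v i => rfl
  have hext : ∀ (q : ℕ) (x : ↥(Finset.range (k q)) → ℝ) (γ : ↥(Finset.range (k q))),
      (ii q x : ∀ _ : ℕ, ℝ) ↑γ = x γ := by
    intro q x γ
    rw [hiicoord]
    have : xs ↑γ ((σ q x : X)) = R q (σ q x) γ := rfl
    rw [this, hσ]
  have hcompat : ∀ p q, p < q → ∀ x : ↥(Finset.range (k p)) → ℝ,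
      ii p x = ii q (BD.restrCLM (Finset.range (k q)) (ii p x)) := by
    intro p q hpq x
    have hy : ((σ p x : X)) ∈ LinearMap.range (Q q : X →ₗ[ℝ] X) := hmono' p q hpq.le (σ p x).2
    have hres : BD.restrCLM (Finset.range (k q)) (ii p x) = R q ⟨(σ p x : X), hy⟩ := rfl
    rw [hres, hiiapp, hiiapp, hσ2]
  have hbddi : ∀ q, ‖ii q‖ ≤ b * M := by
    intro q
    apply ContinuousLinearMap.opNorm_le_bound _ (by positivity)
    intro v
    rw [hiiapp]
    have h1 : ‖((σ q v : X))‖ ≤ M * ‖v‖ := by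
      apply key q _ (σ q v).2 _ (norm_nonneg v)
      intro i hi
      have h2 : xs i ((σ q v : X)) = v ⟨i, Finset.mem_range.2 hi⟩ := by
        have : xs i ((σ q v : X)) = R q (σ q v) ⟨i, Finset.mem_range.2 hi⟩ := rfl
        rw [this, hσ]
      rw [h2]
      calc |v ⟨i, Finset.mem_range.2 hi⟩| = ‖v ⟨i, Finset.mem_range.2 hi⟩‖ := rfl
        _ ≤ ‖v‖ := norm_le_pi_norm v _
    calc ‖J ((σ q v : X))‖ ≤ b * ‖((σ q v : X))‖ := hJnorm _
      _ ≤ b * (M * ‖v‖) := mul_le_mul_of_nonneg_left h1 hb.le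
      _ = b * M * ‖v‖ := by ring
  -- build the system
  let S : BD.System ℕ :=
    { Γs := fun q => Finset.range (k q)
      strict := by
        intro p q hpq
        exact lt_iff_le_not_ge.2 ⟨Finset.range_subset_range.2 (hk hpq).le,
          fun hc => absurd (Finset.range_subset_range.1 hc) (by have := hk hpq; omega)⟩
      nonempty := fun q => Finset.nonempty_range_iff.2 (by
        have h1 : k 0 ≤ k q := hk.monotone (Nat.zero_le q)
        omega)
      covers := fun γ => ⟨γ + 1, Finset.mem_range.2
        (lt_of_lt_of_le (Nat.lt_succ_self γ) hk.le_apply)⟩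
      i := ii
      extension := hext
      compat := hcompat
      bdd := ⟨b * M, by rintro s ⟨q, rfl⟩; exact hbddi q⟩ }
  refine ⟨ℕ, S, ?_⟩
  -- facts about rk and dvec
  have hrk_le : ∀ (γ q : ℕ), γ ∈ Finset.range (k q) → S.rk γ ≤ q := fun γ q h =>
    S.rk_min'' h
  have hrk_mem : ∀ γ : ℕ, γ ∈ Finset.range (k (S.rk γ)) := fun γ => S.rk_spec' γ
  have hdvec : ∀ γ : ℕ, S.dvec γ =
      ii (S.rk γ) (fun δ => if (δ : ℕ) = γ then 1 else 0) := fun γ => S.dvec_eq' γ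
  -- decomposition of vectors in the finite-dimensional coordinate spaces
  have hdecomp : ∀ q (v : ↥(Finset.range (k q)) → ℝ),
      v = ∑ δ : ↥(Finset.range (k q)), v δ •
        (fun δ' : ↥(Finset.range (k q)) => if (δ' : ℕ) = (δ : ℕ) then (1:ℝ) else 0) := by
    intro q v
    funext δ'
    rw [Finset.sum_apply]
    have : ∀ δ : ↥(Finset.range (k q)),
        (v δ • (fun δ'' : ↥(Finset.range (k q)) =>
          if (δ'' : ℕ) = (δ : ℕ) then (1:ℝ) else 0)) δ'
          = if δ' = δ then v δ else 0 := by
      intro δ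
      simp only [Pi.smul_apply, smul_eq_mul, Subtype.coe_inj]
      by_cases h : δ' = δ <;> simp [h]
    rw [Finset.sum_congr rfl (fun δ _ => this δ)]
    simp
  -- the span membership
  have claim : ∀ (n q γ : ℕ), γ ∈ Finset.range (k q) → q ≤ S.rk γ + n →
      ii q (fun δ => if (δ : ℕ) = γ then 1 else 0) ∈
        Submodule.span ℝ (Set.range S.dvec) := by
    intro n
    induction n with
    | zero =>
      intro q γ hγ hle
      have h1 : S.rk γ = q := le_antisymm (hrk_le γ q hγ) (by omega)
      have h2 := hdvec γ
      rw [h1] at h2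
      rw [← h2]
      exact Submodule.subset_span ⟨γ, rfl⟩
    | succ n IH =>
      intro q γ hγ hle
      rcases le_or_gt q (S.rk γ + n) with h | h
      · exact IH q γ hγ h
      · have hpq : S.rk γ < q := by
          have := hrk_le γ q hγ
          omega
        have hcomp := S.compat (S.rk γ) q hpq (fun δ => if (δ : ℕ) = γ then 1 else 0)
        set w : ↥(Finset.range (k q)) → ℝ :=
          BD.restrCLM (Finset.range (k q)) (ii (S.rk γ)
            (fun δ => if (δ : ℕ) = γ then 1 else 0)) with hwdef
        have hw : ∀ δ : ↥(Finset.range (k q)), (δ : ℕ) < k (S.rk γ) →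
            w δ = (if (δ : ℕ) = γ then 1 else 0) := by
          intro δ hδ
          have h1 : w δ = (ii (S.rk γ) (fun δ' => if (δ' : ℕ) = γ then 1 else 0) :
              ∀ _ : ℕ, ℝ) ↑δ := rfl
          rw [h1]
          have h2 := hext (S.rk γ) (fun δ' => if (δ' : ℕ) = γ then 1 else 0)
            ⟨↑δ, Finset.mem_range.2 hδ⟩
          exact h2
        have hdw : S.dvec γ = ii q w := by
          rw [hdvec]
          exact hcomp
        set u : ↥(Finset.range (k q)) → ℝ :=
            w - (fun δ : ↥(Finset.range (k q)) => if (δ : ℕ) = γ then (1:ℝ) else 0) with hudef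
        have hsplit : ii q (fun δ => if (δ : ℕ) = γ then (1:ℝ) else 0) =
            S.dvec γ - ii q u := by
          rw [hdw, ← map_sub]
          congr 1
          funext δ
          rw [hudef]
          simp only [Pi.sub_apply]
          ring
        rw [hsplit]
        apply Submodule.sub_mem
        · exact Submodule.subset_span ⟨γ, rfl⟩
        · rw [hdecomp q u, map_sum]
          apply Submodule.sum_mem
          intro δ _
          rw [map_smul]
          rcases lt_or_ge (δ : ℕ) (k (S.rk γ)) with hδ | hδ
          · have : u δ = 0 := by
              rw [hudef]
              simp only [Pi.sub_apply]
              rw [hw δ hδ]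
              exact sub_self _
            rw [this, zero_smul]
            exact Submodule.zero_mem _
          · apply Submodule.smul_mem
            have hrkδ : S.rk γ < S.rk (δ : ℕ) := by
              by_contra hc
              push_neg at hc
              have h1 : (δ : ℕ) ∈ Finset.range (k (S.rk (δ:ℕ))) := hrk_mem (δ : ℕ)
              have h2 : k (S.rk (δ:ℕ)) ≤ k (S.rk γ) := hk.monotone hc
              rw [Finset.mem_range] at h1
              omega
            exact IH q (δ : ℕ) δ.2 (by omega)
  have hii_span : ∀ q v, ii q v ∈ Submodule.span ℝ (Set.range S.dvec) := by
    intro q v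
    rw [hdecomp q v, map_sum]
    apply Submodule.sum_mem
    intro δ _
    rw [map_smul]
    exact Submodule.smul_mem _ _ (claim q q (δ : ℕ) δ.2 (Nat.le_add_left q _))
  -- J maps into the BD space
  have hJmem : ∀ x : X, J x ∈ S.space := by
    intro x
    have h1 : ∀ q, J (Q q x) ∈ Submodule.span ℝ (Set.range S.dvec) := by
      intro q
      have hy : Q q x ∈ LinearMap.range (Q q : X →ₗ[ℝ] X) := ⟨x, rfl⟩
      have h2 : J (Q q x) = ii q (R q ⟨Q q x, hy⟩) := by
        rw [hiiapp, hσ2]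
      rw [h2]
      exact hii_span _ _
    show J x ∈ (Submodule.span ℝ (Set.range S.dvec)).topologicalClosure
    rw [← SetLike.mem_coe, Submodule.topologicalClosure_coe]
    exact mem_closure_of_tendsto ((J.continuous.tendsto x).comp (hconv x))
      (Filter.Eventually.of_forall h1)
  -- range of J is closed and contains the BD space
  have hanti : AntilipschitzWith ⟨M, hM0.le⟩ J :=
    AddMonoidHomClass.antilipschitz_of_bound J (fun x => by
      exact Jlow x)
  have hclosedrange : IsClosed (Set.range J) := hanti.isClosed_range J.uniformContinuous
  have hspace_le : S.space ≤ LinearMap.range (J : X →ₗ[ℝ] Linf ℕ) := by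
    apply Submodule.topologicalClosure_minimal
    · apply Submodule.span_le.2
      rintro _ ⟨γ, rfl⟩
      rw [SetLike.mem_coe, hdvec γ, hiiapp]
      exact ⟨_, rfl⟩
    · have : (LinearMap.range (J : X →ₗ[ℝ] Linf ℕ) : Set (Linf ℕ)) = Set.range J := by
        ext z
        simp [LinearMap.mem_range]
      rw [this]
      exact hclosedrange
  -- the isomorphism
  let Jc : X →L[ℝ] ↥S.space := J.codRestrict S.space hJmem
  have hker : LinearMap.ker (Jc : X →ₗ[ℝ] ↥S.space) = ⊥ := by
    rw [LinearMap.ker_eq_bot']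
    intro x hx
    have h1 : J x = 0 := by
      have : (Jc x : Linf ℕ) = J x := rfl
      rw [← this, show Jc x = 0 from hx]
      rfl
    have h2 : ‖x‖ ≤ M * ‖J x‖ := Jlow x
    rw [h1, norm_zero, mul_zero] at h2
    exact norm_le_zero_iff.1 h2
  have hrange : LinearMap.range (Jc : X →ₗ[ℝ] ↥S.space) = ⊤ := by
    rw [LinearMap.range_eq_top]
    intro z
    obtain ⟨x, hx⟩ := hspace_le z.2
    exact ⟨x, Subtype.ext hx⟩
  haveI : CompleteSpace ↥S.space :=
    (Submodule.isClosed_topologicalClosure _).completeSpace_coe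
  exact ⟨ContinuousLinearEquiv.ofBijective Jc hker hrange⟩

end Statement13Aux

/-- Let `X` be a Banach space, `(x_i^*)_i` a sequence in `X^*` equivalent to
the unit vector basis of `ℓ1(ℕ)`, and `(Q_n)_n` bounded finite rank projections with increasing
ranges, `Q_n x → x`, such that for some strictly increasing `(k_n)_n` and `0 < ε < 1` with
`ε/(1-ε) < (sup_n ‖Q_n‖)⁻¹` each `Q_n^*[X^*]` is `ε`-close to `span{x_i^* : i < k_n}`.
Then `X` is isomorphic to a Bourgain–Delbaen space. -/
theorem statement13 {X : Type*} [NormedAddCommGroup X] [NormedSpace ℝ X] [CompleteSpace X]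
    (xs : ℕ → (X →L[ℝ] ℝ))
    (hxs : ∃ a : ℝ, 0 < a ∧ ∃ b : ℝ, 0 < b ∧ ∀ (A : Finset ℕ) (lam : ℕ → ℝ),
      a * ∑ i ∈ A, |lam i| ≤ ‖∑ i ∈ A, lam i • xs i‖ ∧
      ‖∑ i ∈ A, lam i • xs i‖ ≤ b * ∑ i ∈ A, |lam i|)
    (Q : ℕ → (X →L[ℝ] X))
    (hproj : ∀ n x, Q n (Q n x) = Q n x)
    (hfinrank : ∀ n, FiniteDimensional ℝ ↥(LinearMap.range (Q n : X →ₗ[ℝ] X)))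
    (hmono : ∀ n, LinearMap.range (Q n : X →ₗ[ℝ] X) ≤ LinearMap.range (Q (n + 1) : X →ₗ[ℝ] X))
    (hconv : ∀ x : X, Filter.Tendsto (fun n => Q n x) Filter.atTop (nhds x))
    (k : ℕ → ℕ) (hk : StrictMono k) (ε : ℝ) (hε0 : 0 < ε) (hε1 : ε < 1)
    (hεQ : ε / (1 - ε) < (⨆ n, ‖Q n‖)⁻¹)
    (hclose : ∀ n, EpsClose ε (Submodule.span ℝ (xs '' {i | i < k n})) (adjRange (Q n))) :
    ∃ (Γ : Type) (S : BD.System Γ), Nonempty (X ≃L[ℝ] ↥S.space) := by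
  obtain ⟨a, ha, b, hb, hab⟩ := hxs
  have hxsl : ∀ (A : Finset ℕ) (lam : ℕ → ℝ),
      a * ∑ i ∈ A, |lam i| ≤ ‖∑ i ∈ A, lam i • xs i‖ := fun A lam => (hab A lam).1
  have hxsu : ∀ (A : Finset ℕ) (lam : ℕ → ℝ),
      ‖∑ i ∈ A, lam i • xs i‖ ≤ b * ∑ i ∈ A, |lam i| := fun A lam => (hab A lam).2
  have hxsb : ∀ i, ‖xs i‖ ≤ b := by
    intro i
    have := hxsu {i} (fun _ => 1)
    simpa using this
  have hθ : 0 < ε / (1 - ε) := div_pos hε0 (by linarith)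
  have hbdd : BddAbove (Set.range fun n => ‖Q n‖) := by
    by_contra h
    rw [Real.iSup_of_not_bddAbove h, inv_zero] at hεQ
    linarith
  set C := ⨆ n, ‖Q n‖ with hC
  have hCinv : 0 < C⁻¹ := lt_trans hθ hεQ
  have hC0 : 0 < C := inv_pos.1 hCinv
  have hCn : ∀ n, ‖Q (n + 1)‖ ≤ C := fun n => le_ciSup hbdd (n + 1)
  have hrC : ε / (1 - ε) * C < 1 := by
    have := mul_lt_mul_of_pos_right hεQ hC0
    rwa [inv_mul_cancel₀ (ne_of_gt hC0)] at this
  have hmono' : ∀ p q, p ≤ q → LinearMap.range (Q (p + 1) : X →ₗ[ℝ] X) ≤ LinearMap.range (Q (q + 1) : X →ₗ[ℝ] X) := by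
    intro p q hpq
    have base : ∀ m n, m ≤ n → LinearMap.range (Q m : X →ₗ[ℝ] X) ≤ LinearMap.range (Q n : X →ₗ[ℝ] X) := by
      intro m n h
      induction n, h using Nat.le_induction with
      | base => exact le_rfl
      | succ n hn ih => exact ih.trans (hmono n)
    exact base (p + 1) (q + 1) (by omega)
  exact statement13_main xs a b ha hb hxsl (fun n => Q (n + 1)) (fun n x => hproj (n + 1) x)
    (fun n => hfinrank (n + 1)) hmono'
    (fun x => (hconv x).comp (Filter.tendsto_add_atTop_nat 1))
    (fun n => k (n + 1)) (fun p q h => hk (by omega))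
    (lt_of_le_of_lt (Nat.zero_le _) (hk Nat.zero_lt_one))
    ε hε0 hε1 C hC0 hCn hrC hxsb (fun n => hclose (n + 1))
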